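/- Let W be the ring of Witt vectors of a perfect field of characteristic p, let M be a W-module with an additive endomorphism F (Frobenius-semilinear) and V (inverse-Frobenius-semilinear) satisfying FV = VF = p. If M is V-adically separated and complete, each M/V^n M has finite length, and M/FM has finite k-dimension at most c for a fixed constant c, then M is a finitely generated W-module. -/

import Mathlib

open WittVector

variable (p : ℕ) [hp : Fact p.Prime]

lemma aux_iterate_nsmul' {M : Type*} [AddCommMonoid M] (f : M →+ M) :
    ∀ (n m : ℕ) (x : M), (⇑f)^[n] (m • x) = m • (⇑f)^[n] x := by
  intro n
  induction n with
  | zero => intro m x; simp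
  | succ n ih =>
    intro m x
    rw [Function.iterate_succ_apply, map_nsmul, ih, Function.iterate_succ_apply]

lemma aux_coeff_pow_p_mul' (k : Type*) [CommRing k] [CharP k p] :
    ∀ (n : ℕ) (c : WittVector p k) (i : ℕ), i < n → ((p : WittVector p k) ^ n * c).coeff i = 0 := by
  intro n
  induction n with
  | zero => intro c i hi; omega
  | succ n ih =>
    intro c i hi
    have h1 : (p : WittVector p k) ^ (n + 1) * c
        = verschiebung (frobenius ((p : WittVector p k) ^ n * c)) := by
      rw [verschiebung_frobenius]; ring
    rw [h1]
    cases i with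
    | zero => exact verschiebung_coeff_zero _
    | succ i =>
      rw [verschiebung_coeff_succ]
      have h2 : frobenius ((p : WittVector p k) ^ n * c)
          = (p : WittVector p k) ^ n * frobenius c := by
        rw [RingHom.map_mul, RingHom.map_pow, map_natCast]
      rw [h2]
      exact ih _ _ (by omega)

lemma aux_iterate_verschiebung_eq' (k : Type*) [CommRing k] [CharP k p] [PerfectRing k p] :
    ∀ (n : ℕ) (w : WittVector p k), ∃ c, (⇑(verschiebung (p := p) (R := k)))^[n] w
      = (p : WittVector p k) ^ n * c := by
  intro n
  induction n with
  | zero => intro w; exact ⟨w, by simp⟩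
  | succ n ih =>
    intro w
    obtain ⟨e, he⟩ := (frobenius_bijective p k).surjective w
    obtain ⟨c, hc⟩ := ih e
    refine ⟨c, ?_⟩
    have h1 : verschiebung (p := p) (R := k) w = p • e := by
      rw [← he, verschiebung_frobenius, nsmul_eq_mul, mul_comm]
    rw [Function.iterate_succ_apply, h1, aux_iterate_nsmul', hc, nsmul_eq_mul]
    ring

-- x with vanishing low coefficients is divisible by p^n
lemma aux_dvd_of_coeff_zero (k : Type*) [CommRing k] [CharP k p] [PerfectRing k p]
    (n : ℕ) (x : WittVector p k) (h : ∀ i < n, x.coeff i = 0) :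
    ∃ c, x = (p : WittVector p k) ^ n * c := by
  have h1 := WittVector.eq_iterate_verschiebung (p := p) (R := k) (n := n) h
  obtain ⟨c, hc⟩ := aux_iterate_verschiebung_eq' p k n (x.shift n)
  exact ⟨c, by rw [h1, hc]⟩

lemma aux_witt_complete (k : Type*) [CommRing k] [CharP k p] [PerfectRing k p]
    (s : ℕ → WittVector p k)
    (hs : ∀ n, ∃ c, s (n + 1) - s n = (p : WittVector p k) ^ n * c) :
    ∃ A, ∀ n, ∃ c, A - s n = (p : WittVector p k) ^ n * c := by
  have hdiff : ∀ m n, m ≤ n → ∃ d, s n - s m = (p : WittVector p k) ^ m * d := by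
    intro m n h
    induction n, h using Nat.le_induction with
    | base => exact ⟨0, by simp⟩
    | succ n hmn ih =>
      obtain ⟨d, hd⟩ := ih
      obtain ⟨c, hc⟩ := hs n
      refine ⟨(p : WittVector p k) ^ (n - m) * c + d, ?_⟩
      have h2 : s (n + 1) - s m = (s (n + 1) - s n) + (s n - s m) := by ring
      rw [h2, hc, hd, mul_add, ← mul_assoc, ← pow_add, Nat.add_sub_cancel' hmn]
  have hcoeff : ∀ m n, m ≤ n → ∀ i, i < m → (s n).coeff i = (s m).coeff i := by
    intro m n h i hi
    obtain ⟨d, hd⟩ := hdiff m n h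
    have hk : s n - s m ∈ RingHom.ker (WittVector.truncate (p := p) m) := by
      rw [WittVector.mem_ker_truncate]
      intro j hj
      rw [hd]
      exact aux_coeff_pow_p_mul' p k m d j hj
    rw [RingHom.mem_ker, map_sub, sub_eq_zero] at hk
    have h3 := congrArg (fun t => TruncatedWittVector.coeff ⟨i, hi⟩ t) hk
    simpa [WittVector.coeff_truncate] using h3
  refine ⟨WittVector.mk p (fun i => (s (i + 1)).coeff i), fun n => ?_⟩
  apply aux_dvd_of_coeff_zero
  -- coefficients < n of A - s n vanish
  have htr : WittVector.truncate (p := p) n (WittVector.mk p (fun i => (s (i + 1)).coeff i))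
      = WittVector.truncate (p := p) n (s n) := by
    apply TruncatedWittVector.ext
    intro i
    rw [WittVector.coeff_truncate, WittVector.coeff_truncate]
    show (s ((i : ℕ) + 1)).coeff i = (s n).coeff i
    exact (hcoeff (i + 1) n i.2 i (by omega)).symm
  have hk : (WittVector.mk p (fun i => (s (i + 1)).coeff i)) - s n
      ∈ RingHom.ker (WittVector.truncate (p := p) n) := by
    rw [RingHom.mem_ker, map_sub, sub_eq_zero, htr]
  rw [WittVector.mem_ker_truncate] at hk
  exact fun i hi => hk i hi

lemma aux_noetherian_of_krullDim_le {R M : Type*} [Ring R] [AddCommGroup M] [Module R M]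
    {c : ℕ} (h : Order.krullDim (Submodule R M) ≤ (c : WithBot ℕ∞)) : IsNoetherian R M := by
  rw [isNoetherian_iff, RelEmbedding.wellFounded_iff_isEmpty]
  by_contra hne
  rw [not_isEmpty_iff] at hne
  obtain ⟨f⟩ := hne
  have hmono : ∀ i j : ℕ, i < j → f i < f j := fun i j hij => f.map_rel_iff.mpr hij
  let P : LTSeries (Submodule R M) :=
    ⟨c + 1, fun i => f i, fun i => hmono _ _ (by simp [Fin.lt_def])⟩
  have h1 := Order.LTSeries.length_le_krullDim P
  have h2 : ((c + 1 : ℕ) : WithBot ℕ∞) ≤ ((c : ℕ) : WithBot ℕ∞) := le_trans h1 h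
  have h3 : (c + 1 : ℕ) ≤ c := by exact_mod_cast h2
  omega

/-!
STATEMENT 1: Let `W = W(k)` be the Witt vectors of a perfect field `k` of characteristic `p`,
and `M` a `W`-module with additive operators `F` (Frobenius-semilinear) and `V`
(inverse-Frobenius-semilinear) satisfying `FV = VF = p`.  If `M` is `V`-adically separated and
complete, each `M/V^n M` has finite length, and `M/FM` has finite `k`-dimension at most `c`
(expressed as the length of the lattice of submodules of `M/FM`, which agrees with the
`k`-dimension as `M/FM` is killed by `p`), then `M` is a finitely generated `W`-module.
-/
theorem stmt_1
    (p : ℕ) [Fact p.Prime]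
    (k : Type*) [Field k] [CharP k p] [PerfectRing k p]
    (M : Type*) [AddCommGroup M] [Module (WittVector p k) M]
    (F V : M →+ M)
    -- `F` is `σ`-semilinear and `V` is `σ⁻¹`-semilinear for `σ` the Witt vector Frobenius
    (hF : ∀ (c : WittVector p k) (x : M),
      F (c • x) = (WittVector.frobeniusEquiv p k c) • F x)
    (hV : ∀ (c : WittVector p k) (x : M),
      V (c • x) = ((WittVector.frobeniusEquiv p k).symm c) • V x)
    (hFV : ∀ x : M, F (V x) = p • x) (hVF : ∀ x : M, V (F x) = p • x)
    -- the `V`-adic filtration, by submodules whose underlying sets are the images of `V^[n]`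
    (Fil : ℕ → Submodule (WittVector p k) M)
    (hFil : ∀ n, (Fil n : Set M) = Set.range ((V : M → M)^[n]))
    -- `M` is `V`-adically separated and complete
    (hsep : ⨅ n, Fil n = ⊥)
    (hcomplete : ∀ x : ℕ → M, (∀ n, x (n + 1) - x n ∈ Fil n) → ∃ L, ∀ n, L - x n ∈ Fil n)
    -- each `M/V^n M` has finite length
    (hlen : ∀ n, IsFiniteLength (WittVector p k) (M ⧸ Fil n))
    -- `M/FM` has dimension at most `c`
    (NF : Submodule (WittVector p k) M) (hNF : (NF : Set M) = Set.range F)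
    (c : ℕ)
    (hdim : Order.krullDim (Submodule (WittVector p k) (M ⧸ NF)) ≤ (c : WithBot ℕ∞)) :
    Module.Finite (WittVector p k) M := by
  classical
  have hiter : ∀ (n : ℕ) (z : M), (p ^ n : ℕ) • z = (⇑V)^[n] ((⇑F)^[n] z) := by
    intro n
    induction n with
    | zero => intro z; simp
    | succ n ih =>
      intro z
      calc (p ^ (n + 1) : ℕ) • z = p • ((p ^ n : ℕ) • z) := by
            rw [← mul_smul, ← pow_succ']
        _ = p • ((⇑V)^[n] ((⇑F)^[n] z)) := by rw [ih]
        _ = (⇑V)^[n] (p • (⇑F)^[n] z) := (aux_iterate_nsmul' V n p _).symm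
        _ = (⇑V)^[n] (V (F ((⇑F)^[n] z))) := by rw [hVF]
        _ = (⇑V)^[n + 1] ((⇑F)^[n + 1] z) := by
            rw [← Function.iterate_succ_apply V, ← Function.iterate_succ_apply' F]
  have hWpow : ∀ (n : ℕ) (z : M), ((p : WittVector p k) ^ n) • z ∈ Fil n := by
    intro n z
    have h1 : ((p : WittVector p k) ^ n) • z = (p ^ n : ℕ) • z := by
      rw [← Nat.cast_smul_eq_nsmul (WittVector p k), Nat.cast_pow]
    have h2 : (p ^ n : ℕ) • z ∈ (Fil n : Set M) := by
      rw [hFil n]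
      exact ⟨(⇑F)^[n] z, (hiter n z).symm⟩
    rw [h1]
    exact h2
  have hsep' : ∀ x : M, (∀ n, x ∈ Fil n) → x = 0 := by
    intro x hx
    have hb : x ∈ (⊥ : Submodule (WittVector p k) M) := by
      rw [← hsep]
      exact (Submodule.mem_iInf _).mpr hx
    simpa using hb
  haveI h₁ : IsNoetherian (WittVector p k) (M ⧸ Fil 1) :=
    (isFiniteLength_iff_isNoetherian_isArtinian.mp (hlen 1)).1
  haveI h₂ : IsNoetherian (WittVector p k) (M ⧸ NF) := aux_noetherian_of_krullDim_le hdim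
  have lift : ∀ Q : Submodule (WittVector p k) M,
      (⊤ : Submodule (WittVector p k) (M ⧸ Q)).FG →
      ∃ s : Finset M, ∀ x : M,
        ∃ y ∈ Submodule.span (WittVector p k) (s : Set M), x - y ∈ Q := by
    intro Q hQ
    obtain ⟨t, ht⟩ := hQ
    refine ⟨t.image (Function.surjInv (Submodule.mkQ_surjective Q)), fun x => ?_⟩
    have himg : Q.mkQ '' ((t.image (Function.surjInv (Submodule.mkQ_surjective Q))) : Set M)
        = (t : Set (M ⧸ Q)) := by
      ext a
      simp only [Finset.coe_image, Set.mem_image, Finset.mem_coe]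
      constructor
      · rintro ⟨_, ⟨b, hb, rfl⟩, rfl⟩
        rwa [Function.surjInv_eq (Submodule.mkQ_surjective Q)]
      · intro ha
        exact ⟨_, ⟨a, ha, rfl⟩, Function.surjInv_eq (Submodule.mkQ_surjective Q) a⟩
    have hx : Q.mkQ x ∈ Submodule.map Q.mkQ (Submodule.span (WittVector p k)
        ((t.image (Function.surjInv (Submodule.mkQ_surjective Q))) : Set M)) := by
      rw [Submodule.map_span, himg, ht]
      trivial
    obtain ⟨y, hy, hyx⟩ := hx
    refine ⟨y, hy, ?_⟩
    rw [Submodule.mkQ_apply, Submodule.mkQ_apply] at hyx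
    exact (Submodule.Quotient.eq Q).mp hyx.symm
  obtain ⟨sX, hsX⟩ := lift (Fil 1) (IsNoetherian.noetherian ⊤)
  obtain ⟨sY, hsY⟩ := lift NF (IsNoetherian.noetherian ⊤)
  set S : Finset M := sX ∪ sY.image ⇑V with hS
  have hVY : ∀ y ∈ Submodule.span (WittVector p k) (sY : Set M),
      V y ∈ Submodule.span (WittVector p k) (S : Set M) := by
    intro y hy
    induction hy using Submodule.span_induction with
    | mem z hz =>
        apply Submodule.subset_span
        simp only [hS, Finset.coe_union, Set.mem_union, Finset.coe_image, Set.mem_image]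
        exact Or.inr ⟨z, hz, rfl⟩
    | zero => rw [map_zero]; exact Submodule.zero_mem _
    | add a b _ _ ha hb => rw [map_add]; exact Submodule.add_mem _ ha hb
    | smul a z _ hz => rw [hV]; exact Submodule.smul_mem _ _ hz
  have hXS : Submodule.span (WittVector p k) (sX : Set M)
      ≤ Submodule.span (WittVector p k) (S : Set M) :=
    Submodule.span_mono (by simp [hS, Finset.coe_union])
  have step : ∀ x : M, ∃ y ∈ Submodule.span (WittVector p k) (S : Set M),
      ∃ m : M, x = y + (p : WittVector p k) • m := by
    intro x
    obtain ⟨y₁, hy₁, hxy₁⟩ := hsX x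
    have h4 : x - y₁ ∈ (Fil 1 : Set M) := hxy₁
    rw [hFil 1] at h4
    obtain ⟨u, hu⟩ := h4
    rw [Function.iterate_one] at hu
    obtain ⟨y₂, hy₂, huy₂⟩ := hsY u
    have h5 : u - y₂ ∈ (NF : Set M) := huy₂
    rw [hNF] at h5
    obtain ⟨w, hw⟩ := h5
    refine ⟨y₁ + V y₂, Submodule.add_mem _ (hXS hy₁) (hVY _ hy₂), w, ?_⟩
    have h6 : x = y₁ + V u := by rw [hu]; abel
    have h7 : u = y₂ + F w := by rw [hw]; abel
    rw [h6, h7, map_add, hVF, Nat.cast_smul_eq_nsmul, add_assoc]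
  choose yf hyf mf hmf using step
  refine Module.finite_def.mpr ⟨S, ?_⟩
  rw [eq_top_iff]
  intro x _
  set r : ℕ → M := fun n => (mf)^[n] x with hrdef
  have hr : ∀ n : ℕ, r n = yf (r n) + (p : WittVector p k) • r (n + 1) := by
    intro n
    have hs : r (n + 1) = mf (r n) := Function.iterate_succ_apply' mf n x
    rw [hs]
    exact hmf (r n)
  choose af haf using fun n => Submodule.mem_span_finset.mp (hyf (r n))
  have hser : ∀ i : M, ∃ A : WittVector p k, ∀ n, ∃ cc,
      A - (∑ j ∈ Finset.range n, (p : WittVector p k) ^ j * af j i)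
        = (p : WittVector p k) ^ n * cc := by
    intro i
    apply aux_witt_complete
    intro n
    exact ⟨af n i, by rw [Finset.sum_range_succ]; ring⟩
  choose A hA using hser
  have hps : ∀ n : ℕ, x - (∑ j ∈ Finset.range n, (p : WittVector p k) ^ j • yf (r j))
      = (p : WittVector p k) ^ n • r n := by
    intro n
    induction n with
    | zero => simp [hrdef]
    | succ n ih =>
      rw [Finset.sum_range_succ]
      have h8 : r n - yf (r n) = (p : WittVector p k) • r (n + 1) :=
        sub_eq_iff_eq_add'.mpr (hr n)
      have h9 : x - ((∑ j ∈ Finset.range n, (p : WittVector p k) ^ j • yf (r j))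
          + (p : WittVector p k) ^ n • yf (r n))
          = (x - ∑ j ∈ Finset.range n, (p : WittVector p k) ^ j • yf (r j))
            - (p : WittVector p k) ^ n • yf (r n) := by abel
      rw [h9, ih, ← smul_sub, h8, smul_smul, ← pow_succ]
  have hsum : ∀ n : ℕ, (∑ j ∈ Finset.range n, (p : WittVector p k) ^ j • yf (r j))
      = ∑ i ∈ S, (∑ j ∈ Finset.range n, (p : WittVector p k) ^ j * af j i) • i := by
    intro n
    calc (∑ j ∈ Finset.range n, (p : WittVector p k) ^ j • yf (r j))
        = ∑ j ∈ Finset.range n, ∑ i ∈ S, ((p : WittVector p k) ^ j * af j i) • i := by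
          refine Finset.sum_congr rfl fun j _ => ?_
          rw [← (haf j).2, Finset.smul_sum]
          exact Finset.sum_congr rfl fun i _ => smul_smul _ _ _
      _ = ∑ i ∈ S, ∑ j ∈ Finset.range n, ((p : WittVector p k) ^ j * af j i) • i :=
          Finset.sum_comm
      _ = ∑ i ∈ S, (∑ j ∈ Finset.range n, (p : WittVector p k) ^ j * af j i) • i := by
          exact Finset.sum_congr rfl fun i _ => (Finset.sum_smul).symm
  have hlim : ∀ n : ℕ, x - ∑ i ∈ S, A i • i ∈ Fil n := by
    intro n
    choose d hd using fun i => hA i n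
    have e1 : ∑ i ∈ S, A i • i
        = (∑ i ∈ S, (∑ j ∈ Finset.range n, (p : WittVector p k) ^ j * af j i) • i)
          + (p : WittVector p k) ^ n • (∑ i ∈ S, d i • i) := by
      rw [Finset.smul_sum, ← Finset.sum_add_distrib]
      refine Finset.sum_congr rfl fun i _ => ?_
      have h9 : A i = (∑ j ∈ Finset.range n, (p : WittVector p k) ^ j * af j i)
          + (p : WittVector p k) ^ n * d i := by
        have h10 := hd i
        rw [sub_eq_iff_eq_add] at h10
        rw [h10]; ring
      rw [h9, add_smul, smul_smul]
    have e2 : x - ∑ i ∈ S, A i • i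
        = (p : WittVector p k) ^ n • (r n - ∑ i ∈ S, d i • i) := by
      rw [e1, smul_sub, ← hsum n, sub_add_eq_sub_sub, hps n]
    rw [e2]
    exact hWpow n _
  have hzero : x - ∑ i ∈ S, A i • i = 0 := hsep' _ hlim
  have hxeq : x = ∑ i ∈ S, A i • i := by rwa [sub_eq_zero] at hzero
  rw [hxeq]
  exact Submodule.sum_mem _ fun i hi => Submodule.smul_mem _ _ (Submodule.subset_span hi)
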